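/- Let q be even and let δ ∈ F_{q^6} \ F_{q^3}. Then the map x ↦ Q(x) = (Tr_{F_{q^3}/F_q}(x) + δx)^{1+q^3} is a permutation of F_{q^3} if and only if δ^{-1} + δ^{-q^3} ∈ F_q^*. -/

import Mathlib

open Polynomial

lemma aux_pow_card_mem_range {F G : Type*} [Field F] [Fintype F] [Field G]
    (f : F →+* G) {x : G} (h : x ^ Fintype.card F = x) : x ∈ Set.range f := by
  classical
  by_contra hx
  have hn2 : 1 < Fintype.card F := Fintype.one_lt_card
  set n := Fintype.card F with hn
  set P : Polynomial G := X ^ n - X with hP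
  have hdeg : P.natDegree = n := FiniteField.X_pow_card_sub_X_natDegree_eq G hn2
  have hP0 : P ≠ 0 := fun h0 => by simp [h0] at hdeg; omega
  have hroot : ∀ y ∈ insert x (Finset.univ.image f), y ∈ P.roots.toFinset := by
    intro y hy
    rw [Multiset.mem_toFinset, mem_roots hP0]
    rcases Finset.mem_insert.mp hy with rfl | hy
    · simp [hP, IsRoot.def, h]
    · obtain ⟨a, -, rfl⟩ := Finset.mem_image.mp hy
      simp only [hP, IsRoot.def, eval_sub, eval_pow, eval_X]
      rw [← map_pow, FiniteField.pow_card, sub_self]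
  have hcard : (insert x (Finset.univ.image f)).card = n + 1 := by
    rw [Finset.card_insert_of_notMem (by
      intro hmem
      obtain ⟨a, -, rfl⟩ := Finset.mem_image.mp hmem
      exact hx ⟨a, rfl⟩),
      Finset.card_image_of_injective _ f.injective, Finset.card_univ]
  have hle : n + 1 ≤ P.roots.toFinset.card := hcard ▸ Finset.card_le_card hroot
  have := (P.roots.toFinset_card_le).trans (P.card_roots'.trans_eq hdeg)
  omega

lemma aux_exists_pow_ne {L : Type*} [Field L] [Fintype L] {j : ℕ} (h1 : 1 < j)
    (h2 : j < Fintype.card L) : ∃ y : L, y ^ j ≠ y := by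
  classical
  by_contra hy
  push_neg at hy
  set P : Polynomial L := X ^ j - X with hP
  have hdeg : P.natDegree = j := FiniteField.X_pow_card_sub_X_natDegree_eq L h1
  have hP0 : P ≠ 0 := fun h0 => by simp [h0] at hdeg; omega
  have hroot : ∀ y : L, y ∈ P.roots.toFinset := by
    intro y
    rw [Multiset.mem_toFinset, mem_roots hP0]
    simp [hP, IsRoot.def, hy y]
  have : Fintype.card L ≤ P.roots.toFinset.card := by
    rw [← Finset.card_univ]
    exact Finset.card_le_card fun y _ => hroot y
  have := (P.roots.toFinset_card_le).trans (P.card_roots'.trans_eq hdeg)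
  omega

lemma aux_trace_eq_frobs {F L : Type*} [Field F] [Fintype F] [Field L] [Fintype L]
    [Algebra F L] (hdim : Module.finrank F L = 3) (x : L) :
    algebraMap F L (Algebra.trace F L x)
      = x + x ^ (Fintype.card F) + (x ^ Fintype.card F) ^ Fintype.card F := by
  classical
  haveI : FiniteDimensional F L := .of_finrank_pos (by omega)
  obtain ⟨p, hp⟩ := CharP.exists F
  haveI := hp
  obtain ⟨n, hprime, hcardF⟩ := FiniteField.card F p
  haveI : Fact p.Prime := ⟨hprime⟩
  haveI : CharP L p := charP_of_injective_algebraMap (algebraMap F L).injective p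
  haveI : ExpChar L p := ExpChar.prime (Fact.out)
  have hq2 : 1 < Fintype.card F := Fintype.one_lt_card
  have hcardL : Fintype.card L = Fintype.card F ^ 3 := by
    rw [Module.card_eq_pow_finrank (K := F) (V := L), hdim]
  let σ0 : L →ₐ[F] L :=
    { toRingHom := iterateFrobenius L p n
      commutes' := fun a => by
        show iterateFrobenius L p n (algebraMap F L a) = algebraMap F L a
        rw [iterateFrobenius_def, ← map_pow, ← hcardF, FiniteField.pow_card] }
  let σ : L ≃ₐ[F] L := AlgEquiv.ofBijective σ0 σ0.bijective
  have hσ : ∀ y : L, σ y = y ^ Fintype.card F := by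
    intro y
    have h1 : σ y = iterateFrobenius L p n y := rfl
    rw [h1, iterateFrobenius_def, ← hcardF]
  have hcardAut : Fintype.card (L ≃ₐ[F] L) = 3 := by
    rw [← Nat.card_eq_fintype_card, IsGalois.card_aut_eq_finrank, hdim]
  have hlt1 : Fintype.card F < Fintype.card L := by
    rw [hcardL]
    calc Fintype.card F = Fintype.card F ^ 1 := (pow_one _).symm
    _ < Fintype.card F ^ 3 := Nat.pow_lt_pow_right hq2 (by omega)
  have hlt2 : Fintype.card F ^ 2 < Fintype.card L := by
    rw [hcardL]; exact Nat.pow_lt_pow_right hq2 (by omega)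
  have hσ1 : σ ≠ 1 := by
    obtain ⟨y, hy⟩ := aux_exists_pow_ne hq2 hlt1
    intro h
    exact hy (by rw [← hσ y, h]; rfl)
  have hσ21 : σ * σ ≠ 1 := by
    obtain ⟨y, hy⟩ := aux_exists_pow_ne (j := Fintype.card F ^ 2)
      (Nat.one_lt_pow (by omega) hq2) hlt2
    intro h
    apply hy
    have h2 : (σ * σ) y = y := by rw [h]; rfl
    rwa [AlgEquiv.mul_apply, hσ, hσ, ← pow_mul, ← pow_two] at h2
  have hσ2σ : σ * σ ≠ σ := fun h => hσ1 (by rwa [mul_eq_right] at h)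
  have huniv : (Finset.univ : Finset (L ≃ₐ[F] L)) = {1, σ, σ * σ} := by
    symm
    apply Finset.eq_univ_of_card
    rw [hcardAut]
    rw [Finset.card_insert_of_notMem (by simp [hσ1.symm, hσ21.symm]),
      Finset.card_insert_of_notMem (by simp [hσ2σ.symm]), Finset.card_singleton]
  rw [trace_eq_sum_automorphisms, huniv]
  rw [Finset.sum_insert (by simp [hσ1.symm, hσ21.symm]),
    Finset.sum_insert (by simp [hσ2σ.symm]), Finset.sum_singleton]
  rw [AlgEquiv.one_apply, AlgEquiv.mul_apply, hσ, hσ]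
  ring


/-- **Lemma, even 3-dim.** For `q` even and `δ ∈ F_{q⁶} \ F_{q³}`,
`x ↦ (Tr_{F_{q³}/F_q}(x) + δx)^{1+q³}` permutes `F_{q³}` iff
`δ⁻¹ + δ^{-q³} ∈ F_q^*`. -/
theorem trace_norm_perm_iff (q : ℕ) (hq : Even q) (hq' : IsPrimePow q)
    (K L3 E : Type) [Field K] [Fintype K] [Field L3] [Field E]
    [Algebra K L3] [Algebra L3 E] [Algebra K E] [IsScalarTower K L3 E]
    (hcard : Fintype.card K = q)
    (hdim : Module.finrank K L3 = 3) (hdim2 : Module.finrank L3 E = 2)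
    (δ : E) (hδ : δ ∉ Set.range (algebraMap L3 E))
    (Q : L3 → L3)
    (hQ : ∀ x, algebraMap L3 E (Q x) =
      (algebraMap K E (Algebra.trace K L3 x) + δ * algebraMap L3 E x) ^ (1 + q ^ 3)) :
    Function.Bijective Q ↔
      ∃ c : K, c ≠ 0 ∧ δ⁻¹ + (δ ^ (q ^ 3))⁻¹ = algebraMap K E c := by
  classical
  obtain ⟨p, hp⟩ := CharP.exists K
  haveI := hp
  obtain ⟨n, hprime, hcardK⟩ := FiniteField.card K p
  have hp2 : p = 2 := by
    have h2 : 2 ∣ q := hq.two_dvd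
    rw [← hcard, hcardK] at h2
    exact ((Nat.prime_dvd_prime_iff_eq Nat.prime_two hprime).mp
      (Nat.Prime.dvd_of_dvd_pow Nat.prime_two h2)).symm
  subst hp2
  haveI : Fact (Nat.Prime 2) := ⟨Nat.prime_two⟩
  haveI : FiniteDimensional K L3 := .of_finrank_pos (by rw [hdim]; omega)
  haveI : FiniteDimensional L3 E := .of_finrank_pos (by rw [hdim2]; omega)
  haveI : Finite L3 := Module.finite_of_finite K
  haveI : Fintype L3 := Fintype.ofFinite L3
  haveI : Finite E := Module.finite_of_finite L3
  haveI : Fintype E := Fintype.ofFinite E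
  haveI : CharP L3 2 := charP_of_injective_algebraMap (algebraMap K L3).injective 2
  haveI : CharP E 2 := charP_of_injective_algebraMap (algebraMap L3 E).injective 2
  have hq1 : 1 < q := hcard ▸ Fintype.one_lt_card
  have hcard3 : Fintype.card L3 = q ^ 3 := by
    rw [Module.card_eq_pow_finrank (K := K), hcard, hdim]
  have hcard6 : Fintype.card E = q ^ 3 * q ^ 3 := by
    rw [Module.card_eq_pow_finrank (K := L3), hcard3, hdim2]; ring
  have hq2n : q = 2 ^ (n : ℕ) := by rw [← hcard, hcardK]
  have hq3 : q ^ 3 = 2 ^ ((n : ℕ) * 3) := by rw [hq2n, ← pow_mul]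
  have h2K : (2 : K) = 0 := CharTwo.two_eq_zero
  have h2L : (2 : L3) = 0 := CharTwo.two_eq_zero
  have h2E : (2 : E) = 0 := CharTwo.two_eq_zero
  have hfr3 : ∀ x y : E, (x + y) ^ q ^ 3 = x ^ q ^ 3 + y ^ q ^ 3 := fun x y => by
    rw [hq3]; exact add_pow_char_pow x y 2 _
  have hfrq : ∀ x y : E, (x + y) ^ q = x ^ q + y ^ q := fun x y => by
    rw [hq2n]; exact add_pow_char_pow x y 2 _
  have hιinj : Function.Injective (algebraMap L3 E) := (algebraMap L3 E).injective
  have htower : ∀ a : K, algebraMap K E a = algebraMap L3 E (algebraMap K L3 a) :=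
    fun a => IsScalarTower.algebraMap_apply K L3 E a
  have hfix : ∀ y : L3, (algebraMap L3 E y) ^ q ^ 3 = algebraMap L3 E y := fun y => by
    rw [← map_pow, ← hcard3, FiniteField.pow_card]
  have hmem : ∀ x : E, x ^ q ^ 3 = x → x ∈ Set.range (algebraMap L3 E) := fun x hx => by
    have : x ^ Fintype.card L3 = x := by rw [hcard3]; exact hx
    exact aux_pow_card_mem_range (algebraMap L3 E) this
  have hEfix : ∀ x : E, (x ^ q ^ 3) ^ q ^ 3 = x := fun x => by
    rw [← pow_mul, ← hcard6, FiniteField.pow_card]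
  have hδ0 : δ ≠ 0 := fun h => hδ ⟨0, by simp [h]⟩
  have hδfix : δ ^ q ^ 3 ≠ δ := fun h => hδ (hmem δ h)
  have hδq0 : δ ^ q ^ 3 ≠ 0 := pow_ne_zero _ hδ0
  obtain ⟨s₀, hs₀⟩ := hmem (δ + δ ^ q ^ 3) (by rw [hfr3, hEfix]; ring)
  obtain ⟨N₀, hN₀⟩ := hmem (δ * δ ^ q ^ 3) (by rw [mul_pow, hEfix]; ring)
  have hs0 : s₀ ≠ 0 := by
    intro h
    rw [h, map_zero] at hs₀
    exact hδfix (by linear_combination -hs₀ - δ * h2E)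
  have hN0 : N₀ ≠ 0 := by
    intro h
    rw [h, map_zero] at hN₀
    exact (mul_ne_zero hδ0 hδq0) hN₀.symm
  have htrfr : ∀ z : L3, algebraMap K L3 (Algebra.trace K L3 z)
      = z + z ^ q + (z ^ q) ^ q := fun z => by
    have := aux_trace_eq_frobs hdim z
    rwa [hcard] at this
  have hκfix : ∀ a : K, (algebraMap K L3 a) ^ q = algebraMap K L3 a := fun a => by
    rw [← map_pow, ← hcard, FiniteField.pow_card]
  have htrK : ∀ a : K, Algebra.trace K L3 (algebraMap K L3 a) = a := by
    intro a
    apply (algebraMap K L3).injective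
    rw [htrfr, hκfix, hκfix]
    linear_combination (algebraMap K L3 a) * h2L
  have htr_sq : ∀ z : L3, Algebra.trace K L3 (z * z)
      = Algebra.trace K L3 z * Algebra.trace K L3 z := by
    intro z
    apply (algebraMap K L3).injective
    rw [htrfr, map_mul (algebraMap K L3), htrfr, mul_pow, mul_pow]
    linear_combination (-(z * z ^ q + z * (z ^ q) ^ q + z ^ q * (z ^ q) ^ q)) * h2L
  have hQL : ∀ x : L3, Q x = algebraMap K L3 (Algebra.trace K L3 x) ^ 2
      + s₀ * algebraMap K L3 (Algebra.trace K L3 x) * x + N₀ * x ^ 2 := by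
    intro x
    apply hιinj
    rw [hQ x]
    have hAfix : (algebraMap K E (Algebra.trace K L3 x)) ^ q ^ 3
        = algebraMap K E (Algebra.trace K L3 x) := by rw [htower]; exact hfix _
    rw [pow_add, pow_one, hfr3, mul_pow, hAfix, hfix]
    simp only [map_add, map_mul, map_pow, hs₀, hN₀, ← IsScalarTower.algebraMap_apply K L3 E]
    ring
  have hcond : (∃ c : K, c ≠ 0 ∧ δ⁻¹ + (δ ^ q ^ 3)⁻¹ = algebraMap K E c)
      ↔ (∃ c : K, c ≠ 0 ∧ s₀ = algebraMap K L3 c * N₀) := by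
    apply exists_congr
    intro c
    apply and_congr_right
    intro _
    constructor
    · intro h
      apply hιinj
      rw [map_mul, ← htower, hs₀, hN₀]
      field_simp at h
      linear_combination h
    · intro h
      have h2 : δ + δ ^ q ^ 3 = algebraMap K E c * (δ * δ ^ q ^ 3) := by
        rw [← hs₀, ← hN₀, h, map_mul, htower]
      field_simp
      linear_combination h2
  have hnd : ∀ w : L3, (∀ v, Algebra.trace K L3 (w * v) = 0) → w = 0 := by
    intro w hw
    exact (traceForm_nondegenerate (K := K) (L := L3)).1 w
      (fun v => by simpa [Algebra.traceForm_apply] using hw v)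
  have hexist : ∀ w : L3, w ∉ Set.range (algebraMap K L3) →
      ∃ v, Algebra.trace K L3 (w * v) = 0 ∧ Algebra.trace K L3 v ≠ 0 := by
    intro w hw
    by_contra hcon
    push_neg at hcon
    have hw0 : w ≠ 0 := fun h => hw ⟨0, by simp [h]⟩
    obtain ⟨v₀, hv₀⟩ : ∃ v₀, Algebra.trace K L3 (w * v₀) ≠ 0 := by
      by_contra hall
      push_neg at hall
      exact hw0 (hnd w hall)
    set μ := Algebra.trace K L3 v₀ / Algebra.trace K L3 (w * v₀) with hμ
    have hall : ∀ v, Algebra.trace K L3 v = μ * Algebra.trace K L3 (w * v) := by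
      intro v
      set d := Algebra.trace K L3 (w * v) / Algebra.trace K L3 (w * v₀) with hd
      have h1 : Algebra.trace K L3 (w * (v + algebraMap K L3 d * v₀)) = 0 := by
        rw [mul_add, map_add]
        have e : w * (algebraMap K L3 d * v₀) = d • (w * v₀) := by
          rw [Algebra.smul_def]; ring
        rw [e, map_smul, smul_eq_mul, hd, div_mul_cancel₀ _ hv₀]
        exact CharTwo.add_self_eq_zero _
      have h2 := hcon _ h1
      rw [map_add] at h2
      have e2 : algebraMap K L3 d * v₀ = d • v₀ := (Algebra.smul_def d v₀).symm
      rw [e2, map_smul, smul_eq_mul] at h2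
      have h4 : Algebra.trace K L3 v = d * Algebra.trace K L3 v₀ := by
        linear_combination h2 - d * Algebra.trace K L3 v₀ * h2K
      rw [h4, hd, hμ]
      field_simp
    have hμ0 : μ ≠ 0 := by
      intro h
      have h1 := hall (algebraMap K L3 1)
      rw [htrK, h, zero_mul] at h1
      exact one_ne_zero h1
    have hker : ∀ v, Algebra.trace K L3 ((1 + algebraMap K L3 μ * w) * v) = 0 := by
      intro v
      rw [add_mul, one_mul, map_add]
      have e : algebraMap K L3 μ * w * v = μ • (w * v) := by
        rw [Algebra.smul_def]; ring
      rw [e, map_smul, smul_eq_mul, hall v]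
      exact CharTwo.add_self_eq_zero _
    have h1 : (1 + algebraMap K L3 μ * w) = 0 := hnd _ hker
    apply hw
    refine ⟨μ⁻¹, ?_⟩
    have h2 : algebraMap K L3 μ * w = 1 := by
      linear_combination (-1 : L3) * h1 + (algebraMap K L3 μ * w) * h2L
    rw [map_inv₀]
    exact inv_eq_of_mul_eq_one_right h2
  have hsqrt : ∀ v : L3, ∃ u, u * u = v := by
    have hinj : Function.Injective (fun u : L3 => u * u) := by
      intro a b hab
      simp only at hab
      have h1 : (a - b) * (a - b) = 0 := by
        linear_combination hab + (b * b - a * b) * h2L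
      exact sub_eq_zero.mp (mul_self_eq_zero.mp h1)
    intro v
    exact Finite.injective_iff_surjective.mp hinj v
  rw [hcond]
  constructor
  · intro hbij
    by_contra hno
    push_neg at hno
    have hwnot : N₀ * s₀⁻¹ + algebraMap K L3 (Algebra.trace K L3 s₀⁻¹ + 1)
        ∉ Set.range (algebraMap K L3) := by
      rintro ⟨a, ha⟩
      set b := a - (Algebra.trace K L3 s₀⁻¹ + 1) with hbdef
      have h1 : N₀ * s₀⁻¹ = algebraMap K L3 b := by
        rw [hbdef, map_sub, ha]; ring
      have hb0 : b ≠ 0 := by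
        intro h
        rw [h, map_zero] at h1
        exact hN0 ((mul_eq_zero.mp h1).resolve_right (inv_ne_zero hs0))
      have hκb0 : algebraMap K L3 b ≠ 0 := fun h => hb0 (by
        simpa using h)
      apply hno b⁻¹ (inv_ne_zero hb0)
      have h2 : N₀ = algebraMap K L3 b * s₀ := by
        field_simp at h1
        linear_combination h1
      rw [map_inv₀, h2]
      field_simp
    obtain ⟨v, hv1, hv2⟩ := hexist _ hwnot
    obtain ⟨u, hu⟩ := hsqrt v
    set τ := Algebra.trace K L3 u with hτdef
    have hτ2 : τ * τ = Algebra.trace K L3 v := by rw [hτdef, ← htr_sq, hu]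
    have hτ0 : τ ≠ 0 := fun h => hv2 (by rw [← hτ2, h, mul_zero])
    have hκτ0 : algebraMap K L3 τ ≠ 0 := fun h => hτ0 (by simpa using h)
    have hv0 : v ≠ 0 := fun h => hv2 (by rw [h, map_zero])
    have hu0 : u ≠ 0 := fun h => hv0 (by rw [← hu, h, mul_zero])
    set x := algebraMap K L3 τ * s₀⁻¹ + u
      + (algebraMap K L3 τ)⁻¹ * (N₀ * s₀⁻¹ * (u * u)) with hxdef
    have hMv : Algebra.trace K L3 (N₀ * s₀⁻¹ * (u * u))
        = (Algebra.trace K L3 s₀⁻¹ + 1) * (τ * τ) := by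
      have e1 : (N₀ * s₀⁻¹ + algebraMap K L3 (Algebra.trace K L3 s₀⁻¹ + 1)) * v
          = N₀ * s₀⁻¹ * (u * u) + (Algebra.trace K L3 s₀⁻¹ + 1) • (u * u) := by
        rw [Algebra.smul_def, ← hu]; ring
      have h2 := hv1
      rw [e1, map_add, map_smul, smul_eq_mul, htr_sq, ← hτdef] at h2
      linear_combination h2 - ((Algebra.trace K L3 s₀⁻¹ + 1) * (τ * τ)) * h2K
    have htrx : Algebra.trace K L3 x = 0 := by
      rw [hxdef, map_add, map_add]
      have e1 : algebraMap K L3 τ * s₀⁻¹ = τ • s₀⁻¹ := (Algebra.smul_def _ _).symm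
      have e2 : (algebraMap K L3 τ)⁻¹ * (N₀ * s₀⁻¹ * (u * u))
          = τ⁻¹ • (N₀ * s₀⁻¹ * (u * u)) := by
        rw [Algebra.smul_def, map_inv₀]
      rw [e1, e2, map_smul, map_smul, smul_eq_mul, smul_eq_mul, hMv, ← hτdef]
      have hτinv : τ⁻¹ * (τ * τ) = τ := by field_simp
      linear_combination (Algebra.trace K L3 s₀⁻¹ + 1) * hτinv
        + (τ * Algebra.trace K L3 s₀⁻¹ + τ) * h2K
    have hxs : s₀ * algebraMap K L3 τ * x
        = algebraMap K L3 τ * algebraMap K L3 τ + s₀ * algebraMap K L3 τ * u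
          + N₀ * (u * u) := by
      have hss : s₀ * s₀⁻¹ = 1 := mul_inv_cancel₀ hs0
      have hκτi : algebraMap K L3 τ * (algebraMap K L3 τ)⁻¹ = 1 := mul_inv_cancel₀ hκτ0
      rw [hxdef]
      linear_combination (algebraMap K L3 τ * algebraMap K L3 τ
        + N₀ * (u * u) * (algebraMap K L3 τ * (algebraMap K L3 τ)⁻¹)) * hss
        + (N₀ * (u * u)) * hκτi
    have htrxu : Algebra.trace K L3 (x + u) = τ := by
      rw [map_add, htrx, ← hτdef, zero_add]
    have hcol : Q x = Q (x + u) := by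
      rw [hQL x, hQL (x + u), htrx, htrxu, map_zero]
      linear_combination (-1 : L3) * hxs
        + (-(algebraMap K L3 τ * algebraMap K L3 τ) - s₀ * algebraMap K L3 τ * u
          - N₀ * (u * u) - N₀ * x * u) * h2L
    exact hu0 (left_eq_add.mp (hbij.injective hcol))
  · rintro ⟨c, hc0, hcs⟩
    have hθc0 : algebraMap K E c ≠ 0 := fun h => hc0 (by simpa using h)
    have hαconj : δ⁻¹ ^ q ^ 3 = δ⁻¹ + algebraMap K E c := by
      have hαsum : δ⁻¹ + (δ ^ q ^ 3)⁻¹ = algebraMap K E c := by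
        have key : δ + δ ^ q ^ 3 = algebraMap K E c * (δ * δ ^ q ^ 3) := by
          rw [← hs₀, ← hN₀, hcs, map_mul, ← htower]
        field_simp
        linear_combination key
      rw [inv_pow]
      linear_combination hαsum - δ⁻¹ * h2E
    have hθcq : (algebraMap K E c) ^ q = algebraMap K E c := by
      rw [← map_pow]
      congr 1
      rw [← hcard]
      exact FiniteField.pow_card c
    have hpowcomm : ∀ z : E, (z ^ q) ^ q ^ 3 = (z ^ q ^ 3) ^ q := fun z => by
      rw [← pow_mul, ← pow_mul, mul_comm]
    have e2 : (δ⁻¹ ^ q) ^ q ^ 3 = δ⁻¹ ^ q + algebraMap K E c := by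
      rw [hpowcomm, hαconj, hfrq, hθcq]
    have e3 : ((δ⁻¹ ^ q) ^ q) ^ q ^ 3 = (δ⁻¹ ^ q) ^ q + algebraMap K E c := by
      rw [hpowcomm, e2, hfrq, hθcq]
    have hTq3 : (δ⁻¹ + δ⁻¹ ^ q + (δ⁻¹ ^ q) ^ q) ^ q ^ 3
        = (δ⁻¹ + δ⁻¹ ^ q + (δ⁻¹ ^ q) ^ q) + algebraMap K E c := by
      rw [hfr3, hfr3, hαconj, e2, e3]
      linear_combination (algebraMap K E c) * h2E
    have hTnot : (δ⁻¹ + δ⁻¹ ^ q + (δ⁻¹ ^ q) ^ q) ∉ Set.range (algebraMap L3 E) := by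
      rintro ⟨z, hz⟩
      apply hθc0
      have h1 : (δ⁻¹ + δ⁻¹ ^ q + (δ⁻¹ ^ q) ^ q) ^ q ^ 3
          = δ⁻¹ + δ⁻¹ ^ q + (δ⁻¹ ^ q) ^ q := by rw [← hz, hfix]
      linear_combination (-1 : E) * hTq3 + h1
    have hTneq : Algebra.trace K L3 N₀⁻¹ ≠ c + 1 := by
      intro htrN
      have hm : algebraMap L3 E N₀⁻¹ = δ⁻¹ * (δ⁻¹ + algebraMap K E c) := by
        rw [← hαconj, map_inv₀, hN₀, mul_inv, inv_pow]
      have hS : algebraMap L3 E (algebraMap K L3 (Algebra.trace K L3 N₀⁻¹))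
          = algebraMap L3 E N₀⁻¹ + (algebraMap L3 E N₀⁻¹) ^ q
            + ((algebraMap L3 E N₀⁻¹) ^ q) ^ q := by
        rw [htrfr]
        simp only [map_add, map_pow]
      rw [htrN, ← htower, map_add, map_one, hm, mul_pow, hfrq, hθcq, mul_pow, hfrq,
        hθcq] at hS
      have hprod : ((δ⁻¹ + δ⁻¹ ^ q + (δ⁻¹ ^ q) ^ q) + 1)
          * ((δ⁻¹ + δ⁻¹ ^ q + (δ⁻¹ ^ q) ^ q) + algebraMap K E c + 1) = 0 := by
        linear_combination (-1 : E) * hS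
          + (δ⁻¹ * δ⁻¹ ^ q + δ⁻¹ * (δ⁻¹ ^ q) ^ q + δ⁻¹ ^ q * (δ⁻¹ ^ q) ^ q
            + δ⁻¹ + δ⁻¹ ^ q + (δ⁻¹ ^ q) ^ q + algebraMap K E c + 1) * h2E
      rcases mul_eq_zero.mp hprod with h | h
      · exact hTnot ⟨1, by rw [map_one]; linear_combination (-1 : E) * h + h2E⟩
      · exact hTnot ⟨algebraMap K L3 c + 1, by
          rw [map_add, map_one, ← htower]
          linear_combination (-1 : E) * h + (algebraMap K E c + 1) * h2E⟩
    apply Finite.injective_iff_bijective.mp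
    intro x y hxy
    have hG : algebraMap K L3 (Algebra.trace K L3 x - Algebra.trace K L3 y) ^ 2
        + s₀ * (algebraMap K L3 (Algebra.trace K L3 x) * (x - y)
          + algebraMap K L3 (Algebra.trace K L3 x - Algebra.trace K L3 y) * x
          + algebraMap K L3 (Algebra.trace K L3 x - Algebra.trace K L3 y) * (x - y))
        + N₀ * (x - y) ^ 2 = 0 := by
      rw [map_sub]
      linear_combination (-1 : L3) * hQL x + hQL y + hxy
        + (-(algebraMap K L3 (Algebra.trace K L3 x) * algebraMap K L3 (Algebra.trace K L3 y))
          + algebraMap K L3 (Algebra.trace K L3 y) * algebraMap K L3 (Algebra.trace K L3 y)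
          + s₀ * algebraMap K L3 (Algebra.trace K L3 x) * x
          - s₀ * algebraMap K L3 (Algebra.trace K L3 x) * y
          - s₀ * algebraMap K L3 (Algebra.trace K L3 y) * x
          + s₀ * algebraMap K L3 (Algebra.trace K L3 y) * y
          - N₀ * x * y + N₀ * y * y) * h2L
    set t := Algebra.trace K L3 x with htdef
    set r := Algebra.trace K L3 y with hrdef
    by_cases hτ0 : t - r = 0
    · have hκτ0 : algebraMap K L3 (t - r) = 0 := by rw [hτ0, map_zero]
      have hG2 : N₀ * ((x - y) * (algebraMap K L3 c * algebraMap K L3 t + (x - y))) = 0 := by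
        linear_combination hG
          - (algebraMap K L3 t * (x - y) + algebraMap K L3 (t - r) * x
            + algebraMap K L3 (t - r) * (x - y)) * hcs
          - (algebraMap K L3 (t - r) + algebraMap K L3 c * N₀ * x
            + algebraMap K L3 c * N₀ * (x - y)) * hκτ0
      rcases mul_eq_zero.mp hG2 with h | h
      · exact absurd h hN0
      rcases mul_eq_zero.mp h with h | h
      · exact sub_eq_zero.mp h
      · have hu : x - y = algebraMap K L3 (c * t) := by
          rw [map_mul]
          linear_combination h - (algebraMap K L3 c * algebraMap K L3 t) * h2L
        have h1 : t - r = c * t := by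
          calc t - r = Algebra.trace K L3 (x - y) := by rw [map_sub, ← htdef, ← hrdef]
          _ = c * t := by rw [hu, htrK]
        have hct : c * t = 0 := h1.symm.trans hτ0
        have ht0 : t = 0 := (mul_eq_zero.mp hct).resolve_left hc0
        have hxy0 : x - y = 0 := by rw [hu, ht0, mul_zero, map_zero]
        exact sub_eq_zero.mp hxy0
    · exfalso
      apply hTneq
      set τ := t - r with hτdef2
      have hN₀inv : N₀ * N₀⁻¹ = 1 := mul_inv_cancel₀ hN0
      have hH : (τ * τ) • N₀⁻¹ + ((c * t) • (x - y) + (c * τ) • x + (c * τ) • (x - y))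
          + (x - y) * (x - y) = 0 := by
        simp only [Algebra.smul_def, map_mul]
        linear_combination N₀⁻¹ * hG
          - ((algebraMap K L3 t * (x - y) + algebraMap K L3 τ * x
            + algebraMap K L3 τ * (x - y)) * N₀⁻¹) * hcs
          - (algebraMap K L3 c * (algebraMap K L3 t * (x - y) + algebraMap K L3 τ * x
            + algebraMap K L3 τ * (x - y)) + (x - y) * (x - y)) * hN₀inv
      have h0 := congrArg (Algebra.trace K L3) hH
      rw [map_zero] at h0
      simp only [map_add, map_smul, smul_eq_mul] at h0
      rw [htr_sq, map_sub, ← htdef, ← hrdef, ← hτdef2] at h0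
      have hττ : τ * τ ≠ 0 := mul_ne_zero hτ0 hτ0
      have h1 : τ * τ * (Algebra.trace K L3 N₀⁻¹ + c + 1) = 0 := by
        linear_combination h0 - (c * t * τ) * h2K
      have h2 := (mul_eq_zero.mp h1).resolve_left hττ
      linear_combination h2 - (c + 1) * h2K
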